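/- Let D be a filter on κ, ⟨A₁, A₂⟩ a partition of κ, and λ_i nonzero cardinals for i < κ. Then |∏_{i<κ} λ_i / D| = |∏_{i<κ} λ_i / (D+A₁)| · |∏_{i<κ} λ_i / (D+A₂)|, where if D+A_j is improper the corresponding factor is 1. -/
import Mathlib


universe u

/-- The cardinality of the reduced product `∏_{i<κ} lams i / E`. -/
noncomputable def redCard {κ : Type u} (E : Filter κ) (lams : κ → Cardinal.{u}) :
    Cardinal.{u + 1} :=
  Cardinal.mk
    (Quot (fun f g : {f : κ → Ordinal.{u} // ∀ i, f i < (lams i).ord} =>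
      {i | f.1 i = g.1 i} ∈ E))

/-- For a partition `⟨A₁, A₂⟩` of `κ`,
`|∏ lams i / D| = |∏ lams i / (D+A₁)| * |∏ lams i / (D+A₂)|`
(where `D+A` is the filter generated by `D ∪ {A}`, possibly improper, in which case
the corresponding factor is `1`). -/
theorem stmt_14 {κ : Type u} (D : Filter κ) (A₁ A₂ : Set κ)
    (hdisj : A₁ ∩ A₂ = ∅) (hcover : A₁ ∪ A₂ = Set.univ)
    (lams : κ → Cardinal.{u}) (hpos : ∀ i, 0 < lams i) :
    redCard D lams =
      redCard (D ⊓ Filter.principal A₁) lams * redCard (D ⊓ Filter.principal A₂) lams := by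
  classical
  have hmem : ∀ (A : Set κ) (s : Set κ),
      s ∈ D ⊓ Filter.principal A ↔ {x | x ∈ A → x ∈ s} ∈ D :=
    fun A s => Filter.mem_inf_principal
  set T := {f : κ → Ordinal.{u} // ∀ i, f i < (lams i).ord} with hT
  let r : Filter κ → T → T → Prop := fun E f g => {i | f.1 i = g.1 i} ∈ E
  let cmb : T → T → T := fun f g =>
    ⟨fun i => if i ∈ A₁ then f.1 i else g.1 i, fun i => by
      dsimp only; split_ifs; exacts [f.2 i, g.2 i]⟩
  have hA2 : ∀ i, i ∉ A₁ → i ∈ A₂ := by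
    intro i hi
    have : i ∈ A₁ ∪ A₂ := hcover ▸ Set.mem_univ i
    exact this.resolve_left hi
  have hnd : ∀ i, i ∈ A₂ → i ∉ A₁ := by
    intro i h2 h1
    have : i ∈ A₁ ∩ A₂ := ⟨h1, h2⟩
    rw [hdisj] at this; exact this
  let F : Quot (r D) → Quot (r (D ⊓ Filter.principal A₁)) × Quot (r (D ⊓ Filter.principal A₂)) :=
    Quot.lift (fun f => (Quot.mk _ f, Quot.mk _ f)) (by
      intro a b h
      exact Prod.ext (Quot.sound (Filter.mem_inf_of_left h))
        (Quot.sound (Filter.mem_inf_of_left h)))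
  let G : Quot (r (D ⊓ Filter.principal A₁)) × Quot (r (D ⊓ Filter.principal A₂)) → Quot (r D) :=
    fun p => Quot.lift₂ (fun f g => Quot.mk (r D) (cmb f g))
      (by
        intro f g₁ g₂ h
        refine Quot.sound (Filter.mem_of_superset ((hmem A₂ _).1 h) ?_)
        intro i hi
        simp only [Set.mem_setOf_eq] at hi ⊢
        by_cases h1 : i ∈ A₁
        · simp [cmb, h1]
        · simp [cmb, h1, hi (hA2 i h1)])
      (by
        intro f₁ f₂ g h
        refine Quot.sound (Filter.mem_of_superset ((hmem A₁ _).1 h) ?_)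
        intro i hi
        simp only [Set.mem_setOf_eq] at hi ⊢
        by_cases h1 : i ∈ A₁
        · simp [cmb, h1, hi h1]
        · simp [cmb, h1])
      p.1 p.2
  have hGF : ∀ q, G (F q) = q := by
    intro q
    obtain ⟨f, rfl⟩ := Quot.exists_rep q
    simp only [F, G]
    show Quot.mk (r D) (cmb f f) = Quot.mk (r D) f
    refine Quot.sound ?_
    have h : {i | (cmb f f).1 i = f.1 i} = Set.univ := by
      ext i; simp [cmb]
    show {i | (cmb f f).1 i = f.1 i} ∈ D
    rw [h]; exact Filter.univ_mem
  have hFG : ∀ p, F (G p) = p := by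
    rintro ⟨q1, q2⟩
    obtain ⟨f, rfl⟩ := Quot.exists_rep q1
    obtain ⟨g, rfl⟩ := Quot.exists_rep q2
    simp only [F, G]
    refine Prod.ext ?_ ?_
    · show Quot.mk (r (D ⊓ Filter.principal A₁)) (cmb f g) = Quot.mk _ f
      refine Quot.sound ((hmem A₁ _).2 ?_)
      have h : {x | x ∈ A₁ → x ∈ {i | (cmb f g).1 i = f.1 i}} = Set.univ := by
        ext i; simp only [Set.mem_setOf_eq, Set.mem_univ, iff_true]
        intro h1; simp [cmb, h1]
      rw [h]; exact Filter.univ_mem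
    · show Quot.mk (r (D ⊓ Filter.principal A₂)) (cmb f g) = Quot.mk _ g
      refine Quot.sound ((hmem A₂ _).2 ?_)
      have h : {x | x ∈ A₂ → x ∈ {i | (cmb f g).1 i = g.1 i}} = Set.univ := by
        ext i; simp only [Set.mem_setOf_eq, Set.mem_univ, iff_true]
        intro h2; simp [cmb, hnd i h2]
      rw [h]; exact Filter.univ_mem
  have e : Quot (r D) ≃
      (Quot (r (D ⊓ Filter.principal A₁)) × Quot (r (D ⊓ Filter.principal A₂))) :=
    ⟨F, G, hGF, hFG⟩
  have : Cardinal.mk (Quot (r D)) =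
      Cardinal.mk (Quot (r (D ⊓ Filter.principal A₁))) *
        Cardinal.mk (Quot (r (D ⊓ Filter.principal A₂))) := by
    rw [Cardinal.mk_congr e, Cardinal.mk_prod, Cardinal.lift_id, Cardinal.lift_id]
  exact this
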